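/- Let r ≥ 1 be an integer and let D¹, D² be diagonal matrices with entries in z^{−r}·k[[z]] whose leading coefficients (the coefficients of z^{−r}) are equal and have pairwise distinct diagonal entries. If there exists p ∈ GL_n(k[[z]]) such that p·D¹·p^{-1} − τ(p)·p^{-1} − D² ∈ z·gl_n(k[[z]]), then D¹ − D² ∈ z·gl_n(k[[z]]), i.e. D¹ and D² agree in all degrees ≤ 0. -/

import Mathlib

noncomputable section

open Polynomial Matrix

variable {k : Type*} [Field k]

/-- The derivation `τ = z·d/dz` on `k((z))`, acting coefficientwise by `n`. -/
def tauF (f : LaurentSeries k) : LaurentSeries k :=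
  ⟨fun n => (n : k) * f.coeff n,
    f.isPWO_support'.mono (fun n hn => by
      simp only [Function.mem_support, ne_eq] at hn ⊢
      exact fun h => hn (by rw [h, mul_zero]))⟩

/-- If a Laurent series has vanishing coefficients in negative degrees and is nonzero,
its order is nonnegative. -/
lemma aux_order_nonneg {f : LaurentSeries k} (hf : ∀ m : ℤ, m < 0 → f.coeff m = 0)
    (h0 : f ≠ 0) : 0 ≤ f.order := by
  by_contra h
  push_neg at h
  exact (mt HahnSeries.coeff_order_eq_zero.mp h0) (hf _ h)

/-- Product of a series in `z·k[[z]]` with a series in `k[[z]]` lies in `z·k[[z]]`. -/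
lemma aux_mul_pos {f g : LaurentSeries k} (hf : ∀ m : ℤ, m ≤ 0 → f.coeff m = 0)
    (hg : ∀ m : ℤ, m < 0 → g.coeff m = 0) : ∀ m : ℤ, m ≤ 0 → (f * g).coeff m = 0 := by
  intro m hm
  rcases eq_or_ne f 0 with rfl | hf0
  · simp
  rcases eq_or_ne g 0 with rfl | hg0
  · simp
  apply HahnSeries.coeff_eq_zero_of_lt_order
  rw [HahnSeries.order_mul hf0 hg0]
  have h1 : 1 ≤ f.order := by
    by_contra h
    push_neg at h
    exact (mt HahnSeries.coeff_order_eq_zero.mp hf0) (hf _ (by omega))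
  have h2 : 0 ≤ g.order := aux_order_nonneg hg hg0
  omega

/-- The constant coefficient is multiplicative on power series inside Laurent series. -/
lemma aux_mul_coeff_zero {f g : LaurentSeries k} (hf : ∀ m : ℤ, m < 0 → f.coeff m = 0)
    (hg : ∀ m : ℤ, m < 0 → g.coeff m = 0) :
    (f * g).coeff 0 = f.coeff 0 * g.coeff 0 := by
  rcases eq_or_ne f 0 with rfl | hf0
  · simp
  rcases eq_or_ne g 0 with rfl | hg0
  · simp
  have h1 : 0 ≤ f.order := aux_order_nonneg hf hf0
  have h2 : 0 ≤ g.order := aux_order_nonneg hg hg0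
  rcases eq_or_lt_of_le h1 with he1 | hl1
  · rcases eq_or_lt_of_le h2 with he2 | hl2
    · have := HahnSeries.coeff_mul_order_add_order f g
      rw [← he1, ← he2, add_zero] at this
      rw [this, HahnSeries.leadingCoeff_eq, HahnSeries.leadingCoeff_eq, ← he1, ← he2]
    · have : (0 : ℤ) < (f * g).order := by
        rw [HahnSeries.order_mul hf0 hg0]; omega
      rw [HahnSeries.coeff_eq_zero_of_lt_order this,
        HahnSeries.coeff_eq_zero_of_lt_order hl2, mul_zero]
  · have : (0 : ℤ) < (f * g).order := by
      rw [HahnSeries.order_mul hf0 hg0]; omega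
    rw [HahnSeries.coeff_eq_zero_of_lt_order this,
      HahnSeries.coeff_eq_zero_of_lt_order hl1, zero_mul]

/-- The constant coefficient is multiplicative on finite products of power series. -/
lemma aux_prod_coeff_zero {ι : Type*} (s : Finset ι) (f : ι → LaurentSeries k)
    (h : ∀ i ∈ s, ∀ m : ℤ, m < 0 → (f i).coeff m = 0) :
    (∏ i ∈ s, f i).coeff 0 = ∏ i ∈ s, (f i).coeff 0 ∧
      ∀ m : ℤ, m < 0 → (∏ i ∈ s, f i).coeff m = 0 := by
  classical
  induction s using Finset.cons_induction with
  | empty =>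
    refine ⟨by simp, fun m hm => ?_⟩
    simp only [Finset.prod_empty]
    rw [HahnSeries.coeff_one, if_neg (by omega)]
  | cons a s ha ih =>
    have hs := ih (fun i hi => h i (Finset.mem_cons.mpr (Or.inr hi)))
    have hfa := h a (Finset.mem_cons_self a s)
    rw [Finset.prod_cons, Finset.prod_cons]
    constructor
    · rw [aux_mul_coeff_zero hfa hs.2, hs.1]
    · intro m hm
      rcases eq_or_ne (f a) 0 with he | hfa0
      · simp [he]
      rcases eq_or_ne (∏ i ∈ s, f i) 0 with he | hp0
      · simp [he]
      apply HahnSeries.coeff_eq_zero_of_lt_order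
      rw [HahnSeries.order_mul hfa0 hp0]
      have h1 := aux_order_nonneg hfa hfa0
      have h2 := aux_order_nonneg hs.2 hp0
      omega

/-- let `D¹, D²` be diagonal with entries in `z^{−r}·k[[z]]`, with equal
leading coefficients having pairwise distinct diagonal entries.  If some `p ∈ GL_n(k[[z]])`
satisfies `p·D¹·p⁻¹ − τ(p)·p⁻¹ − D² ∈ z·gl_n(k[[z]])`, then `D¹ − D² ∈ z·gl_n(k[[z]])`,
i.e. `D¹` and `D²` agree in all degrees `≤ 0`. -/
theorem stmt12 [IsAlgClosed k] [CharZero k] {n : ℕ} (r : ℕ) (hr : 1 ≤ r)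
    (D₁ D₂ : Matrix (Fin n) (Fin n) (LaurentSeries k))
    (hdiag1 : ∀ i j, i ≠ j → D₁ i j = 0)
    (hdiag2 : ∀ i j, i ≠ j → D₂ i j = 0)
    (hord1 : ∀ i, ∀ m : ℤ, m < -(r : ℤ) → (D₁ i i).coeff m = 0)
    (hord2 : ∀ i, ∀ m : ℤ, m < -(r : ℤ) → (D₂ i i).coeff m = 0)
    (hlead : ∀ i, (D₁ i i).coeff (-(r : ℤ)) = (D₂ i i).coeff (-(r : ℤ)))
    (hdist : ∀ i j, i ≠ j → (D₁ i i).coeff (-(r : ℤ)) ≠ (D₁ j j).coeff (-(r : ℤ)))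
    (p : Matrix (Fin n) (Fin n) (LaurentSeries k))
    -- p ∈ GL_n(k[[z]]): entries in k[[z]] and determinant a unit of k[[z]]
    (hpint : ∀ i j, ∀ m : ℤ, m < 0 → (p i j).coeff m = 0)
    (hpunit : (p.det).coeff 0 ≠ 0)
    (hgauge : ∀ i j, ∀ m : ℤ, m ≤ 0 →
      ((p * D₁ * p⁻¹ - (p.map tauF) * p⁻¹ - D₂) i j).coeff m = 0) :
    ∀ i j, ∀ m : ℤ, m ≤ 0 → ((D₁ - D₂) i j).coeff m = 0 := by
  classical
  -- p is invertible
  have hdet : p.det ≠ 0 := fun h => hpunit (by rw [h, HahnSeries.coeff_zero])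
  have hPp : p⁻¹ * p = 1 := Matrix.nonsing_inv_mul p (isUnit_iff_ne_zero.mpr hdet)
  set X : Matrix (Fin n) (Fin n) (LaurentSeries k) :=
    p * D₁ * p⁻¹ - (p.map tauF) * p⁻¹ - D₂ with hX
  -- X·p lies in z·gl_n(k[[z]])
  have hXp : ∀ i j, ∀ m : ℤ, m ≤ 0 → ((X * p) i j).coeff m = 0 := by
    intro i j m hm
    rw [Matrix.mul_apply]
    have hsum : (∑ l, X i l * p l j).coeff m = ∑ l, (X i l * p l j).coeff m :=
      map_sum (HahnSeries.coeff.addMonoidHom m) _ _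
    rw [hsum]
    apply Finset.sum_eq_zero
    intro l _
    exact aux_mul_pos (fun m' hm' => hgauge i l m' hm') (hpint l j) m hm
  -- expand X·p
  have h1 : X * p = p * D₁ - p.map tauF - D₂ * p := by
    rw [hX, Matrix.sub_mul, Matrix.sub_mul, Matrix.mul_assoc (p * D₁), hPp, Matrix.mul_one,
      Matrix.mul_assoc (p.map tauF), hPp, Matrix.mul_one]
  -- key scalar relation
  have hkey : ∀ i j, ∀ m : ℤ, m ≤ 0 → (p i j * (D₁ j j - D₂ i i)).coeff m = 0 := by
    intro i j m hm
    have h2 := hXp i j m hm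
    rw [h1] at h2
    have hpD : ((p * D₁) i j).coeff m = (p i j * D₁ j j).coeff m := by
      rw [Matrix.mul_apply]
      congr 1
      apply Finset.sum_eq_single j
      · intro l _ hl
        rw [hdiag1 l j hl, mul_zero]
      · intro hj; exact absurd (Finset.mem_univ j) hj
    have hDp : ((D₂ * p) i j).coeff m = (D₂ i i * p i j).coeff m := by
      rw [Matrix.mul_apply]
      congr 1
      apply Finset.sum_eq_single i
      · intro l _ hl
        rw [hdiag2 i l (Ne.symm hl), zero_mul]
      · intro hi; exact absurd (Finset.mem_univ i) hi
    have htau : ((p.map tauF) i j).coeff m = 0 := by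
      show (m : k) * (p i j).coeff m = 0
      rcases lt_or_eq_of_le hm with hlt | heq
      · rw [hpint i j m hlt, mul_zero]
      · rw [heq]; simp
    rw [Matrix.sub_apply, Matrix.sub_apply, HahnSeries.coeff_sub, HahnSeries.coeff_sub,
      hpD, hDp, htau, sub_zero] at h2
    rw [mul_sub, HahnSeries.coeff_sub, mul_comm (p i j) (D₂ i i)]
    exact h2
  -- off-diagonal constant terms of p vanish
  have hp0off : ∀ i j, i ≠ j → (p i j).coeff 0 = 0 := by
    intro i j hij
    by_contra hne
    have hf0 : p i j ≠ 0 := HahnSeries.ne_zero_of_coeff_ne_zero hne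
    have hford : (p i j).order ≤ 0 := HahnSeries.order_le_of_coeff_ne_zero hne
    have hc : (D₁ j j - D₂ i i).coeff (-(r : ℤ)) ≠ 0 := by
      rw [HahnSeries.coeff_sub, ← hlead i]
      exact sub_ne_zero.mpr (hdist j i (Ne.symm hij))
    have hc0 : D₁ j j - D₂ i i ≠ 0 := HahnSeries.ne_zero_of_coeff_ne_zero hc
    have hcord : (D₁ j j - D₂ i i).order ≤ -(r : ℤ) :=
      HahnSeries.order_le_of_coeff_ne_zero hc
    have hmul0 : p i j * (D₁ j j - D₂ i i) ≠ 0 := mul_ne_zero hf0 hc0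
    have hcoeff := (mt HahnSeries.coeff_order_eq_zero.mp hmul0)
    have hordm : (p i j * (D₁ j j - D₂ i i)).order ≤ 0 := by
      rw [HahnSeries.order_mul hf0 hc0]; omega
    exact hcoeff (hkey i j _ hordm)
  -- diagonal constant terms of p are nonzero
  have hdet0 : (p.det).coeff 0 = (Matrix.of fun i j => (p i j).coeff 0).det := by
    rw [Matrix.det_apply, Matrix.det_apply]
    have hsum : (∑ σ : Equiv.Perm (Fin n), Equiv.Perm.sign σ • ∏ i, p (σ i) i).coeff 0
        = ∑ σ : Equiv.Perm (Fin n), (Equiv.Perm.sign σ • ∏ i, p (σ i) i).coeff 0 :=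
      map_sum (HahnSeries.coeff.addMonoidHom (0 : ℤ)) _ _
    rw [hsum]
    refine Finset.sum_congr rfl fun σ _ => ?_
    have hz : (((Equiv.Perm.sign σ : ℤ) • ∏ i, p (σ i) i)).coeff 0
        = (Equiv.Perm.sign σ : ℤ) • ((∏ i, p (σ i) i).coeff 0) :=
      AddMonoidHom.map_zsmul (HahnSeries.coeff.addMonoidHom (0 : ℤ))
        ((Equiv.Perm.sign σ : ℤ)) (∏ i, p (σ i) i)
    rw [Units.smul_def, Units.smul_def, hz]
    congr 1
    simpa using (aux_prod_coeff_zero Finset.univ (fun i => p (σ i) i)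
      (fun i _ => hpint (σ i) i)).1
  have hp0diag : ∀ i, (p i i).coeff 0 ≠ 0 := by
    have hform : (Matrix.of fun i j => (p i j).coeff 0) =
        Matrix.diagonal (fun i => (p i i).coeff 0) := by
      ext i j
      by_cases hij : i = j
      · subst hij; simp
      · simp [Matrix.diagonal, hij, hp0off i j hij]
    have hprod : (∏ i, (p i i).coeff 0) ≠ 0 := by
      rw [hdet0, hform, Matrix.det_diagonal] at hpunit
      exact hpunit
    intro i hi
    exact hprod (Finset.prod_eq_zero (Finset.mem_univ i) hi)
  -- conclusion
  intro i j m hm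
  rcases eq_or_ne i j with rfl | hij
  · -- diagonal case
    set c : LaurentSeries k := D₁ i i - D₂ i i with hc
    rcases eq_or_ne c 0 with hc0 | hc0
    · show c.coeff m = 0
      rw [hc0, HahnSeries.coeff_zero]
    have hf0 : p i i ≠ 0 := HahnSeries.ne_zero_of_coeff_ne_zero (hp0diag i)
    have hford : (p i i).order = 0 :=
      le_antisymm (HahnSeries.order_le_of_coeff_ne_zero (hp0diag i))
        (aux_order_nonneg (hpint i i) hf0)
    have hmul0 : p i i * c ≠ 0 := mul_ne_zero hf0 hc0
    have hcoeff := (mt HahnSeries.coeff_order_eq_zero.mp hmul0)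
    have hcord : 0 < c.order := by
      by_contra h
      push_neg at h
      have hordm : (p i i * c).order ≤ 0 := by
        rw [HahnSeries.order_mul hf0 hc0, hford]; omega
      exact hcoeff (hkey i i _ hordm)
    show c.coeff m = 0
    exact HahnSeries.coeff_eq_zero_of_lt_order (lt_of_le_of_lt hm hcord)
  · show (D₁ i j - D₂ i j).coeff m = 0
    rw [hdiag1 i j hij, hdiag2 i j hij, sub_zero, HahnSeries.coeff_zero]
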